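/- (Second-order property of the symmetric Trotter product, from the proof of Theorem 3.1, in a Banach algebra.) Let A be a complete normed unital algebra over ℝ or ℂ, let a_1, …, a_k ∈ A and a = a_1 + ⋯ + a_k. Define G : ℝ → A by G(s) = exp(s·a_1/2)·exp(s·a_2/2)···exp(s·a_k/2) · exp(s·a_k/2)···exp(s·a_2/2)·exp(s·a_1/2) − exp(s·a). Then G(0) = 0, G'(0) = 0 and G''(0) = 0, i.e. the symmetric product σ^{(1)}_s agrees with exp(s·a) to second order at s = 0. -/

import Mathlib

/-- The symmetric (Trotter–Suzuki) product
`σ^{(1)}_s = exp(s a₁/2) ⋯ exp(s a_k/2) · exp(s a_k/2) ⋯ exp(s a₁/2)`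
in a complete normed unital algebra. -/
noncomputable def symTrotterProd {A : Type*} [NormedRing A] [NormedAlgebra ℝ A]
    (k : ℕ) (a : Fin k → A) (s : ℝ) : A :=
  (List.ofFn fun i => NormedSpace.exp ((s / 2) • a i)).prod *
  (List.ofFn fun i => NormedSpace.exp ((s / 2) • a i)).reverse.prod

open NormedSpace

set_option linter.unusedSectionVars false

section aux
variable {A : Type*} [NormedRing A] [NormedAlgebra ℝ A] [CompleteSpace A]

noncomputable def gfun (x : A) (s : ℝ) : A := exp ((s / 2) • x)

theorem gfun_hasDerivAt (x : A) (s : ℝ) :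
    HasDerivAt (gfun x) ((1/2 : ℝ) • (x * gfun x s)) s := by
  have h1 : HasDerivAt (fun u : ℝ => exp (u • x)) (x * exp ((s/2) • x)) (s/2) :=
    hasDerivAt_exp_smul_const' x (s/2)
  have h2 : HasDerivAt (fun u : ℝ => u / 2) (1/2 : ℝ) s := by
    simpa using (hasDerivAt_id s).div_const 2
  show HasDerivAt (fun s : ℝ => exp ((s / 2) • x)) _ s
  simpa [gfun, Function.comp_def] using HasDerivAt.scomp (𝕜 := ℝ) s h1 h2

theorem gfun_hasDerivAt' (x : A) (s : ℝ) :
    HasDerivAt (gfun x) ((1/2 : ℝ) • (gfun x s * x)) s := by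
  have h1 : HasDerivAt (fun u : ℝ => exp (u • x)) (exp ((s/2) • x) * x) (s/2) :=
    hasDerivAt_exp_smul_const x (s/2)
  have h2 : HasDerivAt (fun u : ℝ => u / 2) (1/2 : ℝ) s := by
    simpa using (hasDerivAt_id s).div_const 2
  show HasDerivAt (fun s : ℝ => exp ((s / 2) • x)) _ s
  simpa [gfun, Function.comp_def] using HasDerivAt.scomp (𝕜 := ℝ) s h1 h2

@[simp] theorem gfun_zero (x : A) : gfun x 0 = 1 := by simp [gfun]

/-- The symmetric product as a function of a list. -/
noncomputable def spL : List A → ℝ → A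
  | [], _ => 1
  | x :: l, s => gfun x s * spL l s * gfun x s

/-- First derivative of `spL`. -/
noncomputable def d1L : List A → ℝ → A
  | [], _ => 0
  | x :: l, s =>
      (1/2 : ℝ) • (x * spL (x :: l) s) + gfun x s * d1L l s * gfun x s
        + (1/2 : ℝ) • (spL (x :: l) s * x)

/-- Second derivative of `spL`. -/
noncomputable def d2L : List A → ℝ → A
  | [], _ => 0
  | x :: l, s =>
      (1/2 : ℝ) • (x * d1L (x :: l) s)
        + ((1/2 : ℝ) • (x * (gfun x s * d1L l s * gfun x s))
            + gfun x s * d2L l s * gfun x s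
            + (1/2 : ℝ) • ((gfun x s * d1L l s * gfun x s) * x))
        + (1/2 : ℝ) • (d1L (x :: l) s * x)

theorem spL_hasDerivAt (l : List A) (s : ℝ) : HasDerivAt (spL l) (d1L l s) s := by
  induction l with
  | nil => simpa [spL, d1L] using hasDerivAt_const s (1 : A)
  | cons x l ih =>
    have h := (((gfun_hasDerivAt x s).mul ih).mul (gfun_hasDerivAt' x s))
    exact h.congr_deriv (by
      simp only [d1L, spL, Pi.mul_apply, smul_mul_assoc, mul_smul_comm, add_mul, mul_assoc])

theorem d1L_hasDerivAt (l : List A) (s : ℝ) : HasDerivAt (d1L l) (d2L l s) s := by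
  induction l with
  | nil => simpa [d1L, d2L] using hasDerivAt_const s (0 : A)
  | cons x l ih =>
    have hsp := spL_hasDerivAt (x :: l) s
    have h1 : HasDerivAt (fun s => (1/2 : ℝ) • (x * spL (x :: l) s))
        ((1/2 : ℝ) • (x * d1L (x :: l) s)) s :=
      ((hsp.const_mul x).const_smul (1/2 : ℝ))
    have h3 : HasDerivAt (fun s => (1/2 : ℝ) • (spL (x :: l) s * x))
        ((1/2 : ℝ) • (d1L (x :: l) s * x)) s :=
      ((hsp.mul_const x).const_smul (1/2 : ℝ))
    have h2 := ((gfun_hasDerivAt x s).mul ih).mul (gfun_hasDerivAt' x s)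
    have h := (h1.add h2).add h3
    exact h.congr_deriv (by
      simp only [d2L, Pi.mul_apply, smul_mul_assoc, mul_smul_comm, add_mul, mul_assoc])

@[simp] theorem spL_zero (l : List A) : spL l 0 = 1 := by
  induction l with
  | nil => rfl
  | cons x l ih => simp [spL, ih]

theorem d1L_zero (l : List A) : d1L l 0 = l.sum := by
  induction l with
  | nil => rfl
  | cons x l ih =>
    simp only [d1L, gfun_zero, spL_zero, one_mul, mul_one, ih, List.sum_cons]
    rw [add_right_comm, ← add_smul]
    norm_num

theorem d2L_zero (l : List A) : d2L l 0 = l.sum * l.sum := by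
  induction l with
  | nil => simp [d2L]
  | cons x l ih =>
    simp only [d2L, gfun_zero, d1L_zero, spL_zero, one_mul, mul_one, ih, List.sum_cons]
    set S := l.sum
    simp only [mul_add, add_mul, smul_add]
    rw [show ((1:ℝ)/2) • (x*x) + ((1:ℝ)/2) • (x*S) + (((1:ℝ)/2) • (x*S) + S*S + ((1:ℝ)/2) • (S*x))
        + (((1:ℝ)/2) • (x*x) + ((1:ℝ)/2) • (S*x))
        = (((1:ℝ)/2) • (x*x) + ((1:ℝ)/2) • (x*x)) + ((((1:ℝ)/2) • (x*S) + ((1:ℝ)/2) • (x*S))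
          + ((((1:ℝ)/2) • (S*x) + ((1:ℝ)/2) • (S*x)) + S*S)) from by abel]
    simp only [← add_smul]
    norm_num
    abel

theorem spL_eq (l : List A) (s : ℝ) :
    spL l s = (l.map (gfun · s)).prod * (l.map (gfun · s)).reverse.prod := by
  induction l with
  | nil => simp [spL]
  | cons x l ih =>
    simp only [spL, ih, List.map_cons, List.prod_cons, List.reverse_cons, List.prod_append,
      List.prod_cons, List.prod_nil, mul_one, mul_assoc]

end aux

theorem symTrotterProd_eq_spL {A : Type*} [NormedRing A] [NormedAlgebra ℝ A] [CompleteSpace A]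
    (k : ℕ) (a : Fin k → A) (s : ℝ) :
    symTrotterProd k a s = spL (List.ofFn a) s := by
  rw [spL_eq, List.map_ofFn]
  rfl

/-- From the proof of Theorem 3.1: the symmetric Trotter product
`σ^{(1)}_s = exp(s a₁/2) ⋯ exp(s a_k/2) · exp(s a_k/2) ⋯ exp(s a₁/2)` agrees with
`exp (s (a₁ + ⋯ + a_k))` to second order at `s = 0`: the function
`G(s) = σ^{(1)}_s - exp (s (a₁ + ⋯ + a_k))` satisfies `G(0) = G'(0) = G''(0) = 0`. -/
theorem symmetric_trotter_second_order {A : Type*} [NormedRing A] [NormedAlgebra ℝ A]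
    [CompleteSpace A] (k : ℕ) (a : Fin k → A) :
    ∀ j : ℕ, j ≤ 2 →
      iteratedDeriv j
        (fun s : ℝ => symTrotterProd k a s - NormedSpace.exp (s • ∑ i, a i)) 0 = 0 := by
  set T : A := ∑ i, a i with hT
  set l : List A := List.ofFn a with hl
  have hls : l.sum = T := by rw [hl, hT, List.sum_ofFn]
  have hfun : (fun s : ℝ => symTrotterProd k a s - NormedSpace.exp (s • T))
      = fun s : ℝ => spL l s - NormedSpace.exp (s • T) := by
    funext s; rw [symTrotterProd_eq_spL]
  have hE : ∀ s : ℝ, HasDerivAt (fun u : ℝ => NormedSpace.exp (u • T))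
      (T * NormedSpace.exp (s • T)) s := fun s => hasDerivAt_exp_smul_const' T s
  have hG : ∀ s : ℝ, HasDerivAt (fun s : ℝ => spL l s - NormedSpace.exp (s • T))
      (d1L l s - T * NormedSpace.exp (s • T)) s :=
    fun s => (spL_hasDerivAt l s).sub (hE s)
  have hderiv : deriv (fun s : ℝ => spL l s - NormedSpace.exp (s • T))
      = fun s => d1L l s - T * NormedSpace.exp (s • T) := by
    funext s; exact (hG s).deriv
  have hG2 : ∀ s : ℝ, HasDerivAt (fun s : ℝ => d1L l s - T * NormedSpace.exp (s • T))
      (d2L l s - T * (T * NormedSpace.exp (s • T))) s :=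
    fun s => (d1L_hasDerivAt l s).sub ((hE s).const_mul T)
  intro j hj
  interval_cases j
  · simp [iteratedDeriv_zero, hfun]
  · rw [iteratedDeriv_one, hfun, (hG 0).deriv]
    simp [d1L_zero, hls]
  · rw [show (2:ℕ) = 1 + 1 from rfl, iteratedDeriv_succ, iteratedDeriv_one, hfun, hderiv,
      (hG2 0).deriv]
    simp [d2L_zero, hls]
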